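/- Let 1 ≤ p, q ≤ ∞. If f ∈ L^{p,q}(R × R^d) and g ∈ 𝓛^{∞,∞}(R × R^d), then the sequence of inner products c(j₁,j₂) = ∫_R ∫_{R^d} f(x₁,x₂) g(x₁−j₁, x₂−j₂) dx₁ dx₂ belongs to ℓ^{p,q}(Z × Z^d) and ‖c‖_{ℓ^{p,q}} ≤ ‖f‖_{L^{p,q}} ‖g‖_{𝓛^{∞,∞}}. -/

import Mathlib

open MeasureTheory ENNReal Filter

noncomputable section

abbrev Zd (d : ℕ) := Fin d → ℤ
abbrev Rd (d : ℕ) := Fin d → ℝ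

/-- coercion of an integer lattice point to `ℝ^d` -/
def zcast {d : ℕ} (j : Zd d) : Rd d := fun i => (j i : ℝ)

/-- the `L^p` "norm" (valued in `ℝ≥0∞`) of an `ℝ≥0∞`-valued function w.r.t. a measure -/
def mnorm (p : ℝ≥0∞) {α : Type*} [MeasurableSpace α] (μ : Measure α) (g : α → ℝ≥0∞) : ℝ≥0∞ :=
  if p = ∞ then essSup g μ else (∫⁻ x, g x ^ p.toReal ∂μ) ^ (1 / p.toReal)

/-- the `ℓ^p` "norm" of an `ℝ≥0∞`-valued sequence -/
def dnorm (p : ℝ≥0∞) {ι : Type*} (c : ι → ℝ≥0∞) : ℝ≥0∞ :=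
  if p = ∞ then ⨆ i, c i else (∑' i, c i ^ p.toReal) ^ (1 / p.toReal)

/-- the mixed Lebesgue norm `‖ ‖f(x₁,·)‖_{L^q(ℝ^d)} ‖_{L^p(ℝ)}` -/
def mixedLpq {d : ℕ} (p q : ℝ≥0∞) (f : ℝ × Rd d → ℂ) : ℝ≥0∞ :=
  mnorm p volume (fun x₁ => mnorm q volume (fun x₂ => (‖f (x₁, x₂)‖₊ : ℝ≥0∞)))

/-- the mixed sequence norm `ℓ^{p,q}(ℤ × ℤ^d)` -/
def lpq {d : ℕ} (p q : ℝ≥0∞) (D : ℤ × Zd d → ℂ) : ℝ≥0∞ :=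
  dnorm p (fun j₁ : ℤ => dnorm q (fun j₂ : Zd d => (‖D (j₁, j₂)‖₊ : ℝ≥0∞)))

def cube (d : ℕ) : Set (Rd d) := Set.Icc 0 1

/-- the amalgam norm `𝓛^{p,q}` -/
def amal {d : ℕ} (p q : ℝ≥0∞) (f : ℝ × Rd d → ℂ) : ℝ≥0∞ :=
  mnorm p (volume.restrict (Set.Icc (0:ℝ) 1)) (fun x₁ =>
    ∑' j₁ : ℤ, mnorm q (volume.restrict (cube d)) (fun x₂ =>
      ∑' j₂ : Zd d, (‖f (x₁ + (j₁:ℝ), x₂ + zcast j₂)‖₊ : ℝ≥0∞)))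

/-- the Wiener amalgam norm `W(L^{1,1})` -/
def wiener {d : ℕ} (f : ℝ × Rd d → ℂ) : ℝ≥0∞ :=
  ∑' j₁ : ℤ, ⨆ x₁ : Set.Icc (0:ℝ) 1, ∑' j₂ : Zd d, ⨆ x₂ : cube d,
    (‖f ((x₁:ℝ) + (j₁:ℝ), (x₂:Rd d) + zcast j₂)‖₊ : ℝ≥0∞)

/-- the semi-convolution `f ∗' D` -/
def semiConv {d : ℕ} (f : ℝ × Rd d → ℂ) (D : ℤ × Zd d → ℂ) : ℝ × Rd d → ℂ :=
  fun x => ∑' j : ℤ × Zd d, D j * f (x.1 - (j.1:ℝ), x.2 - zcast j.2)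

section periodize
variable {α : Type*} [MeasurableSpace α] [AddCommGroup α] [MeasurableAdd α]
  {μ : Measure α} [μ.IsAddRightInvariant]
  {L : Type*} [Countable L] {e : L → α} {B : Set α}

lemma periodize (hBm : MeasurableSet B) (hcover : ∀ x : α, ∃! k : L, x - e k ∈ B)
    (h : α → ℝ≥0∞) :
    ∫⁻ x, h x ∂μ = ∑' k : L, ∫⁻ u in B, h (u + e k) ∂μ := by
  have hBk : ∀ k : L, MeasurableSet ((fun x => x + (- e k)) ⁻¹' B) := fun k =>
    (measurable_add_const _) hBm
  have hUnion : ⋃ k : L, ((fun x => x + (- e k)) ⁻¹' B) = Set.univ := by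
    ext x
    simp only [Set.mem_iUnion, Set.mem_preimage, Set.mem_univ, iff_true]
    obtain ⟨k, hk, -⟩ := hcover x
    exact ⟨k, by rwa [← sub_eq_add_neg]⟩
  have hdisj : Pairwise (Function.onFun Disjoint fun k : L => ((fun x => x + (- e k)) ⁻¹' B)) := by
    intro k k' hne
    refine Set.disjoint_left.2 fun x hx hx' => hne ?_
    rw [Set.mem_preimage, ← sub_eq_add_neg] at hx hx'
    obtain ⟨k0, -, huniq⟩ := hcover x
    rw [huniq k hx, huniq k' hx']
  have h1 : ∫⁻ x, h x ∂μ = ∑' k : L, ∫⁻ x in ((fun x => x + (- e k)) ⁻¹' B), h x ∂μ := by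
    rw [← lintegral_iUnion hBk hdisj, hUnion, Measure.restrict_univ]
  rw [h1]
  congr 1
  ext k
  calc ∫⁻ x in ((fun x => x + (- e k)) ⁻¹' B), h x ∂μ
      = ∫⁻ x, ((fun x => x + (- e k)) ⁻¹' B).indicator h x ∂μ :=
        (lintegral_indicator (hBk k) h).symm
    _ = ∫⁻ x, ((fun x => x + (- e k)) ⁻¹' B).indicator h (x + e k) ∂μ :=
        (lintegral_add_right_eq_self _ (e k)).symm
    _ = ∫⁻ x, B.indicator (fun u => h (u + e k)) x ∂μ := by
        congr 1
        ext x
        by_cases hx : x ∈ B <;> simp [Set.indicator, hx]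
    _ = ∫⁻ u in B, h (u + e k) ∂μ := lintegral_indicator hBm _
end periodize

lemma dnorm_mono {p : ℝ≥0∞} {ι : Type*} {c c' : ι → ℝ≥0∞} (h : ∀ i, c i ≤ c' i) :
    dnorm p c ≤ dnorm p c' := by
  unfold dnorm
  split
  · exact iSup_mono h
  · exact ENNReal.rpow_le_rpow
      (ENNReal.tsum_le_tsum fun i => ENNReal.rpow_le_rpow (h i) ENNReal.toReal_nonneg)
      (by positivity)

lemma tsum_holder {ι : Type*} [Countable ι] {r r' : ℝ} (hrr' : r.HolderConjugate r')
    (x y : ι → ℝ≥0∞) :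
    ∑' k, x k * y k ≤ (∑' k, x k ^ r) ^ (1/r) * (∑' k, y k ^ r') ^ (1/r') := by
  letI : MeasurableSpace ι := ⊤
  haveI : MeasurableSingletonClass ι := ⟨fun _ => trivial⟩
  rw [← MeasureTheory.lintegral_count, ← MeasureTheory.lintegral_count,
    ← MeasureTheory.lintegral_count]
  exact ENNReal.lintegral_mul_le_Lp_mul_Lq _ hrr' measurable_from_top.aemeasurable
    measurable_from_top.aemeasurable

lemma jensen_rpow {X : Type*} [MeasurableSpace X] (ν : Measure X) [IsProbabilityMeasure ν]
    {h : X → ℝ≥0∞} (hh : AEMeasurable h ν) {r : ℝ} (hr : 1 ≤ r) :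
    ∫⁻ x, h x ^ (1/r) ∂ν ≤ (∫⁻ x, h x ∂ν) ^ (1/r) := by
  rcases eq_or_lt_of_le hr with rfl|hr
  · simp
  · have hr0 : r ≠ 0 := by positivity
    have hrr' := Real.HolderConjugate.conjExponent hr
    have H := ENNReal.lintegral_mul_le_Lp_mul_Lq ν hrr'
      (f := fun x => h x ^ (1/r)) (g := fun _ => (1:ℝ≥0∞))
      (hh.pow_const _) aemeasurable_const
    simpa [← ENNReal.rpow_mul, one_div, inv_mul_cancel₀ hr0] using H

section core
variable {α : Type*} [MeasurableSpace α] [AddCommGroup α] [MeasurableAdd α]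
  {μ : Measure α} [μ.IsAddRightInvariant]
  {L : Type*} [Countable L] [AddCommGroup L]

lemma core (e : L →+ α) (B : Set α) (hBm : MeasurableSet B) (hB1 : μ B = 1)
    (hcover : ∀ x : α, ∃! k : L, x - e k ∈ B)
    (q : ℝ≥0∞) (hq : 1 ≤ q) (φ ψ : α → ℝ≥0∞) (hφ : Measurable φ) (hψ : Measurable ψ)
    (A : ℝ≥0∞) (hA : ∀ᵐ u ∂(μ.restrict B), (∑' k : L, ψ (u + e k)) ≤ A) :
    dnorm q (fun j : L => ∫⁻ x, φ x * ψ (x - e j) ∂μ) ≤ mnorm q μ φ * A := by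
  haveI : IsProbabilityMeasure (μ.restrict B) :=
    ⟨by rw [Measure.restrict_apply_univ]; exact hB1⟩
  -- measurability of building blocks
  have m1 : ∀ k : L, Measurable (fun u : α => φ (u + e k)) := fun k =>
    hφ.comp (measurable_add_const _)
  have m2 : ∀ m : L, Measurable (fun u : α => ψ (u + e m)) := fun m =>
    hψ.comp (measurable_add_const _)
  -- rewrite each inner product via periodization
  have hc : ∀ j : L, (∫⁻ x, φ x * ψ (x - e j) ∂μ)
      = ∫⁻ u in B, ∑' k : L, φ (u + e k) * ψ (u + e (k - j)) ∂μ := by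
    intro j
    rw [periodize hBm hcover]
    simp only [add_sub_assoc, ← map_sub]
    exact (lintegral_tsum (fun k => ((m1 k).mul (m2 (k - j))).aemeasurable)).symm
  -- reindexing sums of ψ-translates
  have hWj : ∀ (u : α) (j : L), (∑' k : L, ψ (u + e (k - j))) = ∑' m : L, ψ (u + e m) :=
    fun u j => (Equiv.subRight j).tsum_eq (fun m => ψ (u + e m))
  rcases eq_or_ne q ∞ with rfl | hq'
  · -- q = ∞
    have hφk : ∀ᵐ u ∂(μ.restrict B), ∀ k : L, φ (u + e k) ≤ essSup φ μ := by
      refine ae_restrict_of_ae (ae_all_iff.2 fun k => ?_)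
      have hmp : MeasurePreserving (fun x : α => x + e k) μ μ :=
        measurePreserving_add_right μ (e k)
      have h0 := ENNReal.ae_le_essSup (μ := μ) φ
      rw [ae_iff] at h0 ⊢
      exact hmp.quasiMeasurePreserving.preimage_null h0
    simp only [dnorm, mnorm, if_pos rfl]
    refine iSup_le fun j => ?_
    rw [hc j]
    have hbd : ∀ᵐ u ∂(μ.restrict B),
        (∑' k : L, φ (u + e k) * ψ (u + e (k - j))) ≤ essSup φ μ * A := by
      filter_upwards [hφk, hA] with u h1u h2u
      calc (∑' k : L, φ (u + e k) * ψ (u + e (k - j)))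
          ≤ ∑' k : L, essSup φ μ * ψ (u + e (k - j)) :=
            ENNReal.tsum_le_tsum fun k => mul_le_mul_left (h1u k) _
        _ = essSup φ μ * ∑' k : L, ψ (u + e (k - j)) := ENNReal.tsum_mul_left
        _ ≤ essSup φ μ * A := by rw [hWj u j]; exact mul_le_mul_right h2u _
    calc ∫⁻ u in B, ∑' k : L, φ (u + e k) * ψ (u + e (k - j)) ∂μ
        ≤ ∫⁻ _ in B, essSup φ μ * A ∂μ := lintegral_mono_ae hbd
      _ = essSup φ μ * A := by
          rw [setLIntegral_const, hB1, mul_one]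
  · -- q < ∞
    have hr1 : (1:ℝ) ≤ q.toReal := by
      simpa using ENNReal.toReal_mono hq' hq
    set r : ℝ := q.toReal with hrdef
    have hr0 : (0:ℝ) < r := lt_of_lt_of_le one_pos hr1
    simp only [dnorm, mnorm, if_neg hq']
    rcases eq_or_lt_of_le hr1 with hre | hrlt
    · -- q = 1
      rw [show q.toReal = 1 from hre.symm]
      simp only [ENNReal.rpow_one, one_div_one]
      calc (∑' j : L, ∫⁻ x, φ x * ψ (x - e j) ∂μ)
          = ∑' j : L, ∫⁻ u in B, ∑' k : L, φ (u + e k) * ψ (u + e (k - j)) ∂μ := by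
            congr 1; ext j; exact hc j
        _ = ∫⁻ u in B, ∑' j : L, ∑' k : L, φ (u + e k) * ψ (u + e (k - j)) ∂μ :=
            (lintegral_tsum (fun j =>
              (Measurable.ennreal_tsum fun k => (m1 k).mul (m2 (k - j))).aemeasurable)).symm
        _ ≤ ∫⁻ u in B, A * ∑' k : L, φ (u + e k) ∂μ := by
            refine lintegral_mono_ae ?_
            filter_upwards [hA] with u hu
            rw [ENNReal.tsum_comm]
            calc (∑' k : L, ∑' j : L, φ (u + e k) * ψ (u + e (k - j)))
                = ∑' k : L, φ (u + e k) * ∑' j : L, ψ (u + e (k - j)) := by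
                  congr 1; ext k; exact ENNReal.tsum_mul_left
              _ ≤ ∑' k : L, φ (u + e k) * A := by
                  refine ENNReal.tsum_le_tsum fun k => mul_le_mul_right ?_ _
                  exact le_of_eq_of_le ((Equiv.subLeft k).tsum_eq (fun m => ψ (u + e m))) hu
              _ = A * ∑' k : L, φ (u + e k) := by
                  rw [ENNReal.tsum_mul_right, mul_comm]
        _ = A * ∫⁻ u in B, ∑' k : L, φ (u + e k) ∂μ :=
            lintegral_const_mul A (Measurable.ennreal_tsum fun k => m1 k)
        _ = A * ∫⁻ x, φ x ∂μ := by
            rw [lintegral_tsum (fun k => (m1 k).aemeasurable), ← periodize hBm hcover]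
        _ = (∫⁻ x, φ x ∂μ) * A := mul_comm _ _
    · -- 1 < q < ∞
      have hrr' := Real.HolderConjugate.conjExponent hrlt
      set r' : ℝ := Real.conjExponent r with hr'def
      have hr'0 : (0:ℝ) < r' := hrr'.symm.pos
      have hinv : 1/r + 1/r' = 1 := by
        simpa only [one_div] using hrr'.inv_add_inv_eq_one
      have gk : ∀ j : L, Measurable fun u : α => ∑' k : L, φ (u + e k) ^ r * ψ (u + e (k - j)) :=
        fun j => Measurable.ennreal_tsum fun k => ((m1 k).pow_const r).mul (m2 (k - j))
      set Θ : L → ℝ≥0∞ :=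
        fun j => ∫⁻ u in B, ∑' k : L, φ (u + e k) ^ r * ψ (u + e (k - j)) ∂μ with hΘ
      -- Step A : pointwise Hölder + Jensen
      have stepA : ∀ j : L, (∫⁻ x, φ x * ψ (x - e j) ∂μ) ≤ Θ j ^ (1/r) * A ^ (1/r') := by
        intro j
        rw [hc j]
        have hptwise : ∀ᵐ u ∂μ.restrict B,
            (∑' k : L, φ (u + e k) * ψ (u + e (k - j)))
              ≤ (∑' k : L, φ (u + e k) ^ r * ψ (u + e (k - j))) ^ (1/r) * A ^ (1/r') := by
          filter_upwards [hA] with u hu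
          calc (∑' k : L, φ (u + e k) * ψ (u + e (k - j)))
              = ∑' k : L, (φ (u + e k) * ψ (u + e (k - j)) ^ (1/r)) * ψ (u + e (k - j)) ^ (1/r') := by
                congr 1; ext k
                rw [mul_assoc, ← ENNReal.rpow_add_of_nonneg _ _ (by positivity) (by positivity),
                  hinv, ENNReal.rpow_one]
            _ ≤ (∑' k : L, (φ (u + e k) * ψ (u + e (k - j)) ^ (1/r)) ^ r) ^ (1/r)
                  * (∑' k : L, (ψ (u + e (k - j)) ^ (1/r')) ^ r') ^ (1/r') :=
                tsum_holder hrr' _ _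
            _ = (∑' k : L, φ (u + e k) ^ r * ψ (u + e (k - j))) ^ (1/r)
                  * (∑' k : L, ψ (u + e (k - j))) ^ (1/r') := by
                have e1 : ∀ k : L, (φ (u + e k) * ψ (u + e (k - j)) ^ (1/r)) ^ r
                    = φ (u + e k) ^ r * ψ (u + e (k - j)) := fun k => by
                  rw [ENNReal.mul_rpow_of_nonneg _ _ hr0.le, ← ENNReal.rpow_mul,
                    one_div, inv_mul_cancel₀ hr0.ne', ENNReal.rpow_one]
                have e2 : ∀ k : L, (ψ (u + e (k - j)) ^ (1/r')) ^ r'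
                    = ψ (u + e (k - j)) := fun k => by
                  rw [← ENNReal.rpow_mul, one_div, inv_mul_cancel₀ hr'0.ne', ENNReal.rpow_one]
                rw [tsum_congr e1, tsum_congr e2]
            _ ≤ (∑' k : L, φ (u + e k) ^ r * ψ (u + e (k - j))) ^ (1/r) * A ^ (1/r') := by
                refine mul_le_mul_right (ENNReal.rpow_le_rpow ?_ (by positivity)) _
                rw [hWj u j]; exact hu
        calc ∫⁻ u in B, ∑' k : L, φ (u + e k) * ψ (u + e (k - j)) ∂μ
            ≤ ∫⁻ u in B,
                (∑' k : L, φ (u + e k) ^ r * ψ (u + e (k - j))) ^ (1/r) * A ^ (1/r') ∂μ :=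
              lintegral_mono_ae hptwise
          _ = (∫⁻ u in B, (∑' k : L, φ (u + e k) ^ r * ψ (u + e (k - j))) ^ (1/r) ∂μ)
                * A ^ (1/r') := lintegral_mul_const _ ((gk j).pow_const _)
          _ ≤ Θ j ^ (1/r) * A ^ (1/r') := by
              exact mul_le_mul_left (jensen_rpow _ (gk j).aemeasurable hr1) _
      -- Step B : summing the Θ's
      have hΘsum : (∑' j : L, Θ j) ≤ A * ∫⁻ x, φ x ^ r ∂μ := by
        calc (∑' j : L, Θ j)
            = ∫⁻ u in B, ∑' j : L, ∑' k : L, φ (u + e k) ^ r * ψ (u + e (k - j)) ∂μ :=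
              (lintegral_tsum (fun j => (gk j).aemeasurable)).symm
          _ ≤ ∫⁻ u in B, A * ∑' k : L, φ (u + e k) ^ r ∂μ := by
              refine lintegral_mono_ae ?_
              filter_upwards [hA] with u hu
              rw [ENNReal.tsum_comm]
              calc (∑' k : L, ∑' j : L, φ (u + e k) ^ r * ψ (u + e (k - j)))
                  = ∑' k : L, φ (u + e k) ^ r * ∑' j : L, ψ (u + e (k - j)) := by
                    congr 1; ext k; exact ENNReal.tsum_mul_left
                _ ≤ ∑' k : L, φ (u + e k) ^ r * A := by
                    refine ENNReal.tsum_le_tsum fun k => mul_le_mul_right ?_ _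
                    exact le_of_eq_of_le ((Equiv.subLeft k).tsum_eq (fun m => ψ (u + e m))) hu
                _ = A * ∑' k : L, φ (u + e k) ^ r := by
                    rw [ENNReal.tsum_mul_right, mul_comm]
          _ = A * ∫⁻ u in B, ∑' k : L, φ (u + e k) ^ r ∂μ :=
              lintegral_const_mul A (Measurable.ennreal_tsum fun k => (m1 k).pow_const r)
          _ = A * ∫⁻ x, φ x ^ r ∂μ := by
              rw [lintegral_tsum (fun k => ((m1 k).pow_const r).aemeasurable),
                ← periodize hBm hcover (fun x => φ x ^ r)]
      -- Step C : conclude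
      have hs1 : (1/r') * r + 1 = r := by
        have h1 : (1:ℝ)/r' = 1 - 1/r := by linarith
        rw [h1, sub_mul, one_mul, one_div, inv_mul_cancel₀ hr0.ne']
        ring
      calc (∑' j : L, (∫⁻ x, φ x * ψ (x - e j) ∂μ) ^ q.toReal) ^ (1 / q.toReal)
          ≤ (∑' j : L, (Θ j ^ (1/r) * A ^ (1/r')) ^ r) ^ (1/r) :=
            ENNReal.rpow_le_rpow
              (ENNReal.tsum_le_tsum fun j => ENNReal.rpow_le_rpow (stepA j) hr0.le)
              (by positivity)
        _ = (A ^ ((1/r')*r) * ∑' j : L, Θ j) ^ (1/r) := by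
            have e3 : ∀ j : L, (Θ j ^ (1/r) * A ^ (1/r')) ^ r = A ^ ((1/r')*r) * Θ j := fun j => by
              rw [ENNReal.mul_rpow_of_nonneg _ _ hr0.le, ← ENNReal.rpow_mul, ← ENNReal.rpow_mul,
                show (1/r) * r = 1 by field_simp, ENNReal.rpow_one, mul_comm]
            rw [tsum_congr e3, ENNReal.tsum_mul_left]
        _ ≤ (A ^ ((1/r')*r) * (A * ∫⁻ x, φ x ^ r ∂μ)) ^ (1/r) :=
            ENNReal.rpow_le_rpow (mul_le_mul_right hΘsum _) (by positivity)
        _ = (A ^ r * ∫⁻ x, φ x ^ r ∂μ) ^ (1/r) := by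
            have hAA : A ^ ((1/r')*r) * A = A ^ r := by
              have h2 : A ^ ((1/r')*r) * A ^ (1:ℝ) = A ^ ((1/r')*r + 1) :=
                (ENNReal.rpow_add_of_nonneg _ _ (by positivity) zero_le_one).symm
              rw [ENNReal.rpow_one] at h2
              rw [h2, hs1]
            rw [← mul_assoc, hAA]
        _ = (∫⁻ x, φ x ^ q.toReal ∂μ) ^ (1 / q.toReal) * A := by
            rw [ENNReal.mul_rpow_of_nonneg _ _ (by positivity), ← ENNReal.rpow_mul,
              mul_one_div, div_self hr0.ne', ENNReal.rpow_one, mul_comm]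
end core

lemma iSup_min_nat_rpow (a : ℝ≥0∞) {r : ℝ} (hr1 : 1 ≤ r) :
    (⨆ N : ℕ, (min a N) ^ r) = a ^ r := by
  have hr0 : (0:ℝ) < r := lt_of_lt_of_le one_pos hr1
  refine le_antisymm (iSup_le fun N => ENNReal.rpow_le_rpow (min_le_left _ _) hr0.le) ?_
  rcases eq_or_ne a ∞ with rfl | ha
  · have hN : ∀ N : ℕ, (N:ℝ≥0∞) ≤ (min ⊤ (N:ℝ≥0∞)) ^ r := fun N => by
      rw [min_eq_right le_top]
      rcases Nat.eq_zero_or_pos N with rfl | hNpos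
      · simp
      · have h1N : (1:ℝ≥0∞) ≤ (N:ℝ≥0∞) := by exact_mod_cast hNpos
        calc (N:ℝ≥0∞) = (N:ℝ≥0∞) ^ (1:ℝ) := (ENNReal.rpow_one _).symm
          _ ≤ (N:ℝ≥0∞) ^ r := ENNReal.rpow_le_rpow_of_exponent_le h1N hr1
    calc (⊤:ℝ≥0∞) ^ r = ⊤ := ENNReal.top_rpow_of_pos hr0
      _ = ⨆ N : ℕ, (N:ℝ≥0∞) := ENNReal.iSup_natCast.symm
      _ ≤ ⨆ N : ℕ, (min ⊤ (N:ℝ≥0∞)) ^ r := iSup_mono hN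
  · obtain ⟨N, hN⟩ := ENNReal.exists_nat_gt ha
    refine le_trans (le_of_eq ?_) (le_iSup (fun N : ℕ => (min a N) ^ r) N)
    rw [min_eq_left hN.le]

lemma mink {ι X : Type*} [Countable ι] [MeasurableSpace X] {μ : Measure X}
    (q : ℝ≥0∞) (hq : 1 ≤ q) {F : X → ι → ℝ≥0∞} (hF : ∀ j, Measurable fun x => F x j) :
    dnorm q (fun j => ∫⁻ x, F x j ∂μ) ≤ ∫⁻ x, dnorm q (F x) ∂μ := by
  rcases eq_or_ne q ∞ with rfl | hq'
  · simp only [dnorm, if_pos rfl]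
    exact iSup_le fun j => lintegral_mono fun x => le_iSup (F x) j
  have hr1 : (1:ℝ) ≤ q.toReal := by simpa using ENNReal.toReal_mono hq' hq
  simp only [dnorm, if_neg hq']
  rcases eq_or_lt_of_le hr1 with hre | hrlt
  · -- q.toReal = 1
    rw [show q.toReal = 1 from hre.symm]
    simp only [ENNReal.rpow_one, one_div_one]
    rw [← lintegral_tsum fun j => (hF j).aemeasurable]
  · -- 1 < r
    set r : ℝ := q.toReal with hrdef
    have hr0 : (0:ℝ) < r := lt_of_lt_of_le one_pos hr1
    have hrr' := Real.HolderConjugate.conjExponent hrlt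
    set r' : ℝ := Real.conjExponent r with hr'def
    have hr'0 : (0:ℝ) < r' := hrr'.symm.pos
    have hinv : 1/r' + 1/r = 1 := by
      have := hrr'.inv_add_inv_eq_one
      simp only [one_div]
      linarith
    set R : ℝ≥0∞ := ∫⁻ x, (∑' j, F x j ^ r) ^ (1/r) ∂μ with hR
    set I : ι → ℝ≥0∞ := fun j => ∫⁻ x, F x j ∂μ with hI
    have main : (∑' j, I j ^ r) ≤ R ^ r := by
      rw [ENNReal.tsum_eq_iSup_sum]
      refine iSup_le fun s => ?_
      calc (∑ j ∈ s, I j ^ r) = ∑ j ∈ s, ⨆ N : ℕ, (min (I j) N) ^ r :=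
            Finset.sum_congr rfl fun j _ => (iSup_min_nat_rpow (I j) hr1).symm
        _ = ⨆ N : ℕ, ∑ j ∈ s, (min (I j) N) ^ r := by
            refine ENNReal.finsetSum_iSup_of_monotone fun j a b hab => ?_
            exact ENNReal.rpow_le_rpow (min_le_min le_rfl (by exact_mod_cast hab)) hr0.le
        _ ≤ R ^ r := by
            refine iSup_le fun N => ?_
            set J : ι → ℝ≥0∞ := fun j => min (I j) N with hJ
            set T : ℝ≥0∞ := ∑ j ∈ s, J j ^ r with hT
            have hTfin : T ≠ ∞ := by
              rw [hT, ← lt_top_iff_ne_top, ENNReal.sum_lt_top]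
              intro j _
              exact lt_of_le_of_lt
                (ENNReal.rpow_le_rpow (min_le_right _ _) hr0.le)
                (ENNReal.rpow_lt_top_of_nonneg hr0.le (by simp))
            rcases eq_or_ne T 0 with hT0 | hT0
            · exact hT0 ▸ zero_le
            have hmeas : Measurable fun x => (∑ j ∈ s, F x j ^ r) ^ (1/r) :=
              (Finset.measurable_sum s fun j _ => (hF j).pow_const r).pow_const _
            have step : T ≤ T ^ (1/r') * R := by
              calc T = ∑ j ∈ s, J j ^ (r-1) * J j := by
                    refine Finset.sum_congr rfl fun j _ => ?_
                    have h2 : J j ^ ((r-1)+1) = J j ^ (r-1) * J j ^ (1:ℝ) :=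
                      ENNReal.rpow_add_of_nonneg _ _ (by linarith) zero_le_one
                    rw [show (r-1)+1 = r by ring] at h2
                    rw [h2, ENNReal.rpow_one]
                _ ≤ ∑ j ∈ s, J j ^ (r-1) * I j :=
                    Finset.sum_le_sum fun j _ => mul_le_mul_right (min_le_left _ _) _
                _ = ∫⁻ x, ∑ j ∈ s, J j ^ (r-1) * F x j ∂μ := by
                    rw [lintegral_finset_sum _ fun j _ => (hF j).const_mul _]
                    exact Finset.sum_congr rfl fun j _ => (lintegral_const_mul _ (hF j)).symm
                _ ≤ ∫⁻ x, (∑ j ∈ s, (J j ^ (r-1)) ^ r') ^ (1/r')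
                      * (∑ j ∈ s, F x j ^ r) ^ (1/r) ∂μ :=
                    lintegral_mono fun x =>
                      ENNReal.inner_le_Lp_mul_Lq (s := s) (fun j => J j ^ (r-1)) (F x) hrr'.symm
                _ = (∑ j ∈ s, (J j ^ (r-1)) ^ r') ^ (1/r')
                      * ∫⁻ x, (∑ j ∈ s, F x j ^ r) ^ (1/r) ∂μ :=
                    lintegral_const_mul _ hmeas
                _ ≤ T ^ (1/r') * R := by
                    refine mul_le_mul' (le_of_eq ?_) ?_
                    · congr 1
                      refine Finset.sum_congr rfl fun j _ => ?_
                      rw [← ENNReal.rpow_mul, hrr'.sub_one_mul_conj]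
                    · exact lintegral_mono fun x =>
                        ENNReal.rpow_le_rpow (ENNReal.sum_le_tsum s) (by positivity)
            have hcancel : T ^ (1/r) ≤ R := by
              have hsplit : T = T ^ (1/r') * T ^ (1/r) := by
                rw [← ENNReal.rpow_add_of_nonneg _ _ (by positivity) (by positivity), hinv,
                  ENNReal.rpow_one]
              have step2 : T ^ (1/r') * T ^ (1/r) ≤ T ^ (1/r') * R :=
                le_trans (le_of_eq hsplit.symm) step
              refine (ENNReal.mul_le_mul_iff_right ?_ ?_).mp step2
              · simp only [ne_eq, ENNReal.rpow_eq_zero_iff, not_or, not_and]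
                constructor
                · intro h; exact absurd h hT0
                · intro h; exact absurd h hTfin
              · exact ENNReal.rpow_ne_top_of_nonneg (by positivity) hTfin
            calc T = (T ^ (1/r)) ^ r := by
                  rw [← ENNReal.rpow_mul, one_div, inv_mul_cancel₀ hr0.ne', ENNReal.rpow_one]
              _ ≤ R ^ r := ENNReal.rpow_le_rpow hcancel hr0.le
    calc (∑' j, I j ^ r) ^ (1/r) ≤ (R ^ r) ^ (1/r) := ENNReal.rpow_le_rpow main (by positivity)
      _ = R := by rw [← ENNReal.rpow_mul, mul_one_div, div_self hr0.ne', ENNReal.rpow_one]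

lemma essSup_eq_iSup_restrict {α : Type*} [MeasurableSpace α] (μ : Measure α) {L : Type*}
    [Countable L] (Bk : L → Set α) (hm : ∀ k, MeasurableSet (Bk k))
    (hcov : (⋃ k, Bk k) = Set.univ) (φ : α → ℝ≥0∞) :
    essSup φ μ = ⨆ k, essSup φ (μ.restrict (Bk k)) := by
  refine le_antisymm ?_ (iSup_le fun k =>
    essSup_mono_measure (Measure.absolutelyContinuous_of_le Measure.restrict_le_self))
  set S := ⨆ k, essSup φ (μ.restrict (Bk k)) with hS
  refine essSup_le_of_ae_le S ?_
  rw [Filter.EventuallyLE, ae_iff]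
  have hsub : {y | ¬ φ y ≤ S} ⊆ ⋃ k, ({y | ¬ φ y ≤ S} ∩ Bk k) := by
    intro y hy
    have hy2 : y ∈ ⋃ k, Bk k := by rw [hcov]; trivial
    obtain ⟨t, ⟨k, rfl⟩, hyk⟩ := hy2
    exact Set.mem_iUnion.2 ⟨k, hy, hyk⟩
  refine measure_mono_null hsub (measure_iUnion_null fun k => ?_)
  have h0 : (μ.restrict (Bk k)) {y | ¬ φ y ≤ essSup φ (μ.restrict (Bk k))} = 0 :=
    ae_iff.mp (ENNReal.ae_le_essSup φ)
  rw [Measure.restrict_apply' (hm k)] at h0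
  refine measure_mono_null (fun y hy => ?_) h0
  obtain ⟨hy1, hy2⟩ := hy
  refine ⟨fun hle => hy1 (le_trans hle (le_iSup (fun k => essSup φ (μ.restrict (Bk k))) k)), hy2⟩

lemma exists_pow_lt' {b δ : ℝ≥0∞} (hb : b < 1) (hδ : δ ≠ 0) : ∃ n : ℕ, b ^ (n+1) < δ := by
  have hbtop : b ≠ ∞ := (lt_of_lt_of_le hb le_top).ne
  have hbR : b.toReal < 1 := by
    rw [← ENNReal.toReal_one]
    exact ENNReal.toReal_strict_mono one_ne_top hb
  have hbR0 : (0:ℝ) ≤ b.toReal := ENNReal.toReal_nonneg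
  set δ' : ℝ := (min δ 1).toReal with hδ'
  have hmfin : min δ 1 ≠ ∞ := (lt_of_le_of_lt (min_le_right _ _) one_lt_top).ne
  have hδ'0 : 0 < δ' := ENNReal.toReal_pos (by
    intro hcon
    rcases (min_eq_bot (α := ℝ≥0∞)).mp hcon with h1 | h1
    · exact hδ h1
    · exact one_ne_zero h1) hmfin
  have htend : Filter.Tendsto (fun n : ℕ => b.toReal ^ n) Filter.atTop (nhds 0) :=
    tendsto_pow_atTop_nhds_zero_of_lt_one hbR0 hbR
  obtain ⟨n, hn⟩ := (htend.eventually (gt_mem_nhds hδ'0)).exists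
  refine ⟨n, lt_of_lt_of_le ?_ (min_le_left δ 1)⟩
  have hlt : b.toReal ^ (n+1) < δ' :=
    lt_of_le_of_lt (pow_le_pow_of_le_one hbR0 hbR.le (Nat.le_succ n)) hn
  refine (ENNReal.toReal_lt_toReal (ENNReal.pow_ne_top hbtop) hmfin).mp ?_
  rwa [ENNReal.toReal_pow]

lemma essSup_eq_iSup_lintegral {Y : Type*} [MeasurableSpace Y] (ν : Measure Y)
    [IsProbabilityMeasure ν] {h : Y → ℝ≥0∞} (hh : Measurable h) :
    essSup h ν = ⨆ n : ℕ, (∫⁻ y, h y ^ (n+1:ℝ) ∂ν) ^ (1/(n+1:ℝ)) := by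
  have he : ∀ n : ℕ, (0:ℝ) < n + 1 := fun n => by positivity
  refine le_antisymm ?_ (iSup_le fun n => ?_)
  · -- hard direction
    by_contra hcon
    push_neg at hcon
    obtain ⟨a, ha1, ha2⟩ := exists_between hcon
    -- δ := ν {y | a < h y} is positive
    have hδ : ν {y | a < h y} ≠ 0 := by
      intro h0
      have : essSup h ν ≤ a := by
        refine essSup_le_of_ae_le a ?_
        rw [Filter.EventuallyLE, ae_iff]
        convert h0 using 2
        ext y
        simp [not_le]
      exact absurd (lt_of_le_of_lt this ha2) (lt_irrefl _)
    set δ : ℝ≥0∞ := ν {y | a < h y} with hδdef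
    -- each term is at least a * δ^(1/(n+1))
    have hterm : ∀ n : ℕ, a * δ ^ (1/(n+1:ℝ))
        ≤ (∫⁻ y, h y ^ (n+1:ℝ) ∂ν) ^ (1/(n+1:ℝ)) := by
      intro n
      have h1 : a ^ (n+1:ℝ) * δ ≤ ∫⁻ y, h y ^ (n+1:ℝ) ∂ν := by
        calc a ^ (n+1:ℝ) * δ = ∫⁻ _ in {y | a < h y}, a ^ (n+1:ℝ) ∂ν := by
              rw [setLIntegral_const]
          _ ≤ ∫⁻ y in {y | a < h y}, h y ^ (n+1:ℝ) ∂ν := by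
              refine setLIntegral_mono (hh.pow_const _) fun y hy => ?_
              exact ENNReal.rpow_le_rpow (le_of_lt hy) (he n).le
          _ ≤ ∫⁻ y, h y ^ (n+1:ℝ) ∂ν := setLIntegral_le_lintegral _ _
      calc a * δ ^ (1/(n+1:ℝ)) = (a ^ (n+1:ℝ) * δ) ^ (1/(n+1:ℝ)) := by
            rw [ENNReal.mul_rpow_of_nonneg _ _ (by positivity), ← ENNReal.rpow_mul,
              mul_one_div, div_self (he n).ne', ENNReal.rpow_one]
        _ ≤ _ := ENNReal.rpow_le_rpow h1 (by positivity)
    -- hence a ≤ RHS, contradiction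
    have hS : (1:ℝ≥0∞) ≤ ⨆ n : ℕ, δ ^ (1/(n+1:ℝ)) := by
      refine le_of_forall_lt fun b hb => ?_
      obtain ⟨b', hbb', hb'1⟩ := exists_between hb
      obtain ⟨n, hn⟩ := exists_pow_lt' hb'1 hδ
      refine lt_of_lt_of_le hbb' (le_trans ?_ (le_iSup (fun n : ℕ => δ ^ (1/(n+1:ℝ))) n))
      have : b' = (b' ^ (n+1)) ^ (1/(n+1:ℝ)) := by
        rw [← ENNReal.rpow_natCast _ (n+1), ← ENNReal.rpow_mul]
        push_cast
        rw [mul_one_div, div_self (he n).ne', ENNReal.rpow_one]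
      rw [this]
      exact ENNReal.rpow_le_rpow hn.le (by positivity)
    have : a ≤ ⨆ n : ℕ, (∫⁻ y, h y ^ (n+1:ℝ) ∂ν) ^ (1/(n+1:ℝ)) := by
      calc a = a * 1 := (mul_one a).symm
        _ ≤ a * ⨆ n : ℕ, δ ^ (1/(n+1:ℝ)) := mul_le_mul_right hS a
        _ = ⨆ n : ℕ, a * δ ^ (1/(n+1:ℝ)) := ENNReal.mul_iSup _ _
        _ ≤ _ := iSup_mono hterm
    exact absurd (lt_of_le_of_lt this ha1) (lt_irrefl _)
  · -- easy direction
    have h1 : ∫⁻ y, h y ^ (n+1:ℝ) ∂ν ≤ (essSup h ν) ^ (n+1:ℝ) := by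
      calc ∫⁻ y, h y ^ (n+1:ℝ) ∂ν ≤ ∫⁻ _, (essSup h ν) ^ (n+1:ℝ) ∂ν := by
            refine lintegral_mono_ae ((ENNReal.ae_le_essSup h).mono fun y hy => ?_)
            exact ENNReal.rpow_le_rpow hy (he n).le
        _ = (essSup h ν) ^ (n+1:ℝ) := by simp
    calc (∫⁻ y, h y ^ (n+1:ℝ) ∂ν) ^ (1/(n+1:ℝ))
        ≤ ((essSup h ν) ^ (n+1:ℝ)) ^ (1/(n+1:ℝ)) := ENNReal.rpow_le_rpow h1 (by positivity)
      _ = essSup h ν := by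
          rw [← ENNReal.rpow_mul, mul_one_div, div_self (he n).ne', ENNReal.rpow_one]

lemma measurable_essSup_param {X Y : Type*} [MeasurableSpace X] [MeasurableSpace Y]
    (ν : Measure Y) [IsProbabilityMeasure ν] [SFinite ν] {S : X × Y → ℝ≥0∞}
    (hS : Measurable S) : Measurable fun x => essSup (fun y => S (x, y)) ν := by
  have heq : ∀ x, essSup (fun y => S (x, y)) ν
      = ⨆ n : ℕ, (∫⁻ y, S (x, y) ^ (n+1:ℝ) ∂ν) ^ (1/(n+1:ℝ)) := fun x =>
    essSup_eq_iSup_lintegral ν (hS.comp measurable_prodMk_left)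
  simp_rw [heq]
  refine Measurable.iSup fun n => ?_
  exact ((hS.pow_const _).lintegral_prod_right').pow_const _

lemma cover_Ico : ∀ x : ℝ, ∃! k : ℤ, x - (Int.castAddHom ℝ) k ∈ Set.Ico (0:ℝ) 1 := by
  intro x
  refine ⟨⌊x⌋, ⟨Int.fract_nonneg x, Int.fract_lt_one x⟩, fun k hk => ?_⟩
  obtain ⟨h1, h2⟩ := hk
  have h1' : (0:ℝ) ≤ x - (k:ℝ) := h1
  have h2' : x - (k:ℝ) < 1 := h2
  refine (Int.floor_eq_iff.mpr ⟨by linarith, by push_cast; linarith⟩).symm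

def BIco (d : ℕ) : Set (Rd d) := Set.pi Set.univ fun _ : Fin d => Set.Ico (0:ℝ) 1

def zcastHom (d : ℕ) : Zd d →+ Rd d where
  toFun := zcast
  map_zero' := funext fun i => by simp [zcast]
  map_add' := fun a b => funext fun i => by simp [zcast]

lemma measurableSet_BIco (d : ℕ) : MeasurableSet (BIco d) :=
  MeasurableSet.univ_pi fun _ => measurableSet_Ico

lemma volume_BIco (d : ℕ) : volume (BIco d) = 1 := by
  rw [BIco, volume_pi_pi]
  simp [Real.volume_Ico]

lemma cover_pi (d : ℕ) : ∀ x : Rd d, ∃! k : Zd d, x - (zcastHom d) k ∈ BIco d := by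
  intro x
  have hmem : ∀ (k : Zd d), x - (zcastHom d) k ∈ BIco d ↔
      ∀ i, 0 ≤ x i - (k i : ℝ) ∧ x i - (k i : ℝ) < 1 := by
    intro k
    constructor
    · intro h i; exact h i trivial
    · intro h i _; exact h i
  refine ⟨fun i => ⌊x i⌋, (hmem _).2 fun i =>
    ⟨sub_nonneg.2 (Int.floor_le _), by linarith [Int.lt_floor_add_one (x i)]⟩,
    fun k hk => ?_⟩
  funext i
  obtain ⟨h1, h2⟩ := (hmem k).1 hk i
  exact Int.floor_eq_iff.mpr ⟨by linarith, by push_cast; linarith⟩ |>.symm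


lemma mnorm_top {α : Type*} [MeasurableSpace α] (μ : Measure α) (g : α → ℝ≥0∞) :
    mnorm ∞ μ g = essSup g μ := if_pos rfl

lemma BIco_subset_cube (d : ℕ) : BIco d ⊆ cube d := by
  intro x hx
  rw [cube, ← Set.pi_univ_Icc]
  intro i hi
  have := hx i hi
  simp only [Pi.zero_apply, Pi.one_apply]
  exact ⟨(this.1 : (0:ℝ) ≤ x i), (this.2 : x i < 1).le⟩

instance cube_prob (d : ℕ) : IsProbabilityMeasure (volume.restrict (cube d)) := by
  constructor
  rw [Measure.restrict_apply_univ, cube, ← Set.pi_univ_Icc, volume_pi_pi]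
  simp [Real.volume_Icc]

/-- the inner amalgam majorant `G` -/
def Gg {d : ℕ} (g : ℝ × Rd d → ℂ) : ℝ → ℝ≥0∞ := fun t =>
  mnorm ∞ (volume.restrict (cube d)) (fun x₂ =>
      ∑' j₂ : Zd d, (‖g (t, x₂ + zcast j₂)‖₊ : ℝ≥0∞))

/-- the inner mixed-norm function `F` -/
def Ff {d : ℕ} (q : ℝ≥0∞) (f : ℝ × Rd d → ℂ) : ℝ → ℝ≥0∞ := fun x₁ =>
  mnorm q volume (fun x₂ => (‖f (x₁, x₂)‖₊ : ℝ≥0∞))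

lemma amal_eq {d : ℕ} (g : ℝ × Rd d → ℂ) : amal ∞ ∞ g
    = essSup (fun x₁ => ∑' j₁ : ℤ, Gg g (x₁ + (j₁:ℝ)))
      (volume.restrict (Set.Icc (0:ℝ) 1)) :=
  mnorm_top _ _

lemma mixedLpq_eq {d : ℕ} (p q : ℝ≥0∞) (f : ℝ × Rd d → ℂ) :
    mixedLpq p q f = mnorm p volume (Ff q f) := rfl

lemma Gg_eq {d : ℕ} (g : ℝ × Rd d → ℂ) : Gg g = fun t =>
    essSup (fun x₂ => ∑' j₂ : Zd d, (‖g (t, x₂ + zcast j₂)‖₊ : ℝ≥0∞))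
      (volume.restrict (cube d)) :=
  funext fun t => mnorm_top _ _

set_option maxHeartbeats 1000000 in
lemma Gg_meas {d : ℕ} {g : ℝ × Rd d → ℂ} (hg : Measurable g) : Measurable (Gg g) := by
  have hS : Measurable fun tp : ℝ × Rd d =>
      ∑' j₂ : Zd d, (‖g (tp.1, tp.2 + zcast j₂)‖₊ : ℝ≥0∞) :=
    Measurable.ennreal_tsum fun j₂ =>
      hg.enorm.comp (measurable_fst.prodMk (measurable_snd.add_const _))
  rw [Gg_eq]
  exact measurable_essSup_param (volume.restrict (cube d))
    (S := fun tp : ℝ × Rd d => ∑' j₂ : Zd d, (‖g (tp.1, tp.2 + zcast j₂)‖₊ : ℝ≥0∞)) hS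

set_option maxHeartbeats 1000000 in
lemma Ff_meas {d : ℕ} (q : ℝ≥0∞) {f : ℝ × Rd d → ℂ} (hf : Measurable f) :
    Measurable (Ff q f) := by
  rcases eq_or_ne q ∞ with rfl | hq'
  · have hFtop : Ff ∞ f = fun x₁ =>
        essSup (fun x₂ => (‖f (x₁, x₂)‖₊ : ℝ≥0∞)) volume :=
      funext fun x₁ => mnorm_top _ _
    rw [hFtop]
    set Bk : Zd d → Set (Rd d) := fun k => (fun y : Rd d => y + (- zcast k)) ⁻¹' (BIco d)
      with hBk
    have hBkm : ∀ k, MeasurableSet (Bk k) := fun k =>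
      (measurable_add_const _) (measurableSet_BIco d)
    have hBkcov : (⋃ k, Bk k) = Set.univ := by
      ext x
      simp only [Set.mem_iUnion, Set.mem_univ, iff_true]
      obtain ⟨k, hk, -⟩ := cover_pi d x
      exact ⟨k, by rwa [hBk, Set.mem_preimage, ← sub_eq_add_neg]⟩
    have hBkprob : ∀ k, IsProbabilityMeasure (volume.restrict (Bk k)) := by
      intro k
      constructor
      rw [Measure.restrict_apply_univ, hBk]
      rw [(measurePreserving_add_right volume (- zcast k)).measure_preimage
        (measurableSet_BIco d).nullMeasurableSet]
      exact volume_BIco d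
    have heq : ∀ x₁ : ℝ, essSup (fun x₂ => (‖f (x₁, x₂)‖₊ : ℝ≥0∞)) volume
        = ⨆ k : Zd d, essSup (fun x₂ => (‖f (x₁, x₂)‖₊ : ℝ≥0∞))
            (volume.restrict (Bk k)) := fun x₁ =>
      essSup_eq_iSup_restrict volume Bk hBkm hBkcov _
    simp_rw [heq]
    refine Measurable.iSup fun k => ?_
    haveI := hBkprob k
    exact measurable_essSup_param (volume.restrict (Bk k))
      (S := fun xp : ℝ × Rd d => (‖f xp‖₊ : ℝ≥0∞)) hf.enorm
  · have hFq : Ff q f = fun x₁ =>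
        (∫⁻ x₂, (‖f (x₁, x₂)‖₊ : ℝ≥0∞) ^ q.toReal ∂volume) ^ (1/q.toReal) := by
      funext x₁; rw [Ff, mnorm, if_neg hq']
    rw [hFq]
    exact ((hf.enorm.pow_const _).lintegral_prod_right').pow_const _

set_option maxHeartbeats 1000000 in
/-- Lemma 2.6: the sampling inequality
`‖(⟨f, g(·−j₁,·−j₂)⟩)_{j}‖_{ℓ^{p,q}} ≤ ‖f‖_{L^{p,q}} ‖g‖_{𝓛^{∞,∞}}`. -/
theorem stmt3 {d : ℕ} (p q : ℝ≥0∞) (hp : 1 ≤ p) (hq : 1 ≤ q)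
    (f g : ℝ × Rd d → ℂ) (hf : Measurable f) (hg : Measurable g)
    (hfL : mixedLpq p q f ≠ ∞) (hgA : amal ∞ ∞ g ≠ ∞) :
    lpq p q (fun j : ℤ × Zd d =>
        ∫ x : ℝ × Rd d, f x * g (x.1 - (j.1:ℝ), x.2 - zcast j.2))
      ≤ mixedLpq p q f * amal ∞ ∞ g := by
  classical
  -- inner estimate (the Rd d level)
  have hinner : ∀ (x₁ t : ℝ),
      dnorm q (fun j₂ : Zd d =>
          ∫⁻ x₂, (‖f (x₁, x₂)‖₊ : ℝ≥0∞) * (‖g (t, x₂ - zcast j₂)‖₊ : ℝ≥0∞) ∂volume)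
        ≤ Ff q f x₁ * Gg g t := by
    intro x₁ t
    have hA2 : ∀ᵐ u ∂(volume.restrict (BIco d)),
        (∑' k : Zd d, (‖g (t, u + zcast k)‖₊ : ℝ≥0∞)) ≤ Gg g t := by
      have h0 : ∀ᵐ u ∂(volume.restrict (cube d)),
          (∑' k : Zd d, (‖g (t, u + zcast k)‖₊ : ℝ≥0∞)) ≤ Gg g t := by
        rw [Gg_eq]
        exact ENNReal.ae_le_essSup _
      exact ae_restrict_of_ae_restrict_of_subset (BIco_subset_cube d) h0
    exact core (μ := (volume : Measure (Rd d))) (zcastHom d) (BIco d) (measurableSet_BIco d)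
      (volume_BIco d) (cover_pi d) q hq
      (fun x₂ => (‖f (x₁, x₂)‖₊ : ℝ≥0∞)) (fun x₂ => (‖g (t, x₂)‖₊ : ℝ≥0∞))
      (hf.enorm.comp measurable_prodMk_left) (hg.enorm.comp measurable_prodMk_left)
      (Gg g t) hA2
  -- measurability of the partial inner products
  have hHmeas : ∀ (j₁ : ℤ) (j₂ : Zd d),
      Measurable fun x₁ : ℝ =>
        ∫⁻ x₂, (‖f (x₁, x₂)‖₊ : ℝ≥0∞)
          * (‖g (x₁ - (j₁:ℝ), x₂ - zcast j₂)‖₊ : ℝ≥0∞) ∂volume := by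
    intro j₁ j₂
    exact Measurable.lintegral_prod_right'
      (hf.enorm.mul (hg.enorm.comp ((measurable_fst.sub measurable_const).prodMk
        (measurable_snd.sub measurable_const))))
  -- outer estimate (the ℝ level)
  have houter : dnorm p (fun j₁ : ℤ => ∫⁻ x₁, Ff q f x₁ * Gg g (x₁ - (j₁:ℝ)) ∂volume)
      ≤ mnorm p volume (Ff q f) * amal ∞ ∞ g := by
    have hA1 : ∀ᵐ u ∂(volume.restrict (Set.Ico (0:ℝ) 1)),
        (∑' k : ℤ, Gg g (u + (k:ℝ))) ≤ amal ∞ ∞ g := by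
      have h0 : ∀ᵐ u ∂(volume.restrict (Set.Icc (0:ℝ) 1)),
          (∑' k : ℤ, Gg g (u + (k:ℝ))) ≤ amal ∞ ∞ g := by
        rw [amal_eq]
        exact ENNReal.ae_le_essSup _
      exact ae_restrict_of_ae_restrict_of_subset Set.Ico_subset_Icc_self h0
    exact core (μ := (volume : Measure ℝ)) (Int.castAddHom ℝ) (Set.Ico 0 1) measurableSet_Ico
      (by simp [Real.volume_Ico]) cover_Ico p hp (Ff q f) (Gg g) (Ff_meas q hf) (Gg_meas hg)
      (amal ∞ ∞ g) hA1
  -- assembling the chain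
  calc lpq p q (fun j : ℤ × Zd d =>
          ∫ x : ℝ × Rd d, f x * g (x.1 - (j.1:ℝ), x.2 - zcast j.2))
      ≤ dnorm p (fun j₁ : ℤ => dnorm q (fun j₂ : Zd d =>
          ∫⁻ x₁, ∫⁻ x₂, (‖f (x₁, x₂)‖₊ : ℝ≥0∞)
            * (‖g (x₁ - (j₁:ℝ), x₂ - zcast j₂)‖₊ : ℝ≥0∞) ∂volume ∂volume)) := by
        refine dnorm_mono fun j₁ => dnorm_mono fun j₂ => ?_
        have hjm : Measurable fun x : ℝ × Rd d =>
            (‖f x‖₊ : ℝ≥0∞) * (‖g (x.1 - (j₁:ℝ), x.2 - zcast j₂)‖₊ : ℝ≥0∞) :=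
          hf.enorm.mul (hg.enorm.comp ((measurable_fst.sub measurable_const).prodMk
            (measurable_snd.sub measurable_const)))
        calc (↑‖∫ x : ℝ × Rd d, f x * g (x.1 - (j₁:ℝ), x.2 - zcast j₂)‖₊ : ℝ≥0∞)
            ≤ ∫⁻ x : ℝ × Rd d, ↑‖f x * g (x.1 - (j₁:ℝ), x.2 - zcast j₂)‖₊ ∂volume :=
              enorm_integral_le_lintegral_enorm _
          _ = ∫⁻ x : ℝ × Rd d, (‖f x‖₊ : ℝ≥0∞)
                * (‖g (x.1 - (j₁:ℝ), x.2 - zcast j₂)‖₊ : ℝ≥0∞) ∂volume := by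
              simp only [nnnorm_mul, ENNReal.coe_mul]
          _ = ∫⁻ x₁, ∫⁻ x₂, (‖f (x₁, x₂)‖₊ : ℝ≥0∞)
                * (‖g (x₁ - (j₁:ℝ), x₂ - zcast j₂)‖₊ : ℝ≥0∞) ∂volume ∂volume := by
              rw [MeasureTheory.Measure.volume_eq_prod, lintegral_prod _ hjm.aemeasurable]
    _ ≤ dnorm p (fun j₁ : ℤ => ∫⁻ x₁, Ff q f x₁ * Gg g (x₁ - (j₁:ℝ)) ∂volume) := by
        refine dnorm_mono fun j₁ => ?_
        calc dnorm q (fun j₂ : Zd d =>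
                ∫⁻ x₁, ∫⁻ x₂, (‖f (x₁, x₂)‖₊ : ℝ≥0∞)
                  * (‖g (x₁ - (j₁:ℝ), x₂ - zcast j₂)‖₊ : ℝ≥0∞) ∂volume ∂volume)
            ≤ ∫⁻ x₁, dnorm q (fun j₂ : Zd d =>
                ∫⁻ x₂, (‖f (x₁, x₂)‖₊ : ℝ≥0∞)
                  * (‖g (x₁ - (j₁:ℝ), x₂ - zcast j₂)‖₊ : ℝ≥0∞) ∂volume) ∂volume :=
              mink q hq (hHmeas j₁)
          _ ≤ ∫⁻ x₁, Ff q f x₁ * Gg g (x₁ - (j₁:ℝ)) ∂volume :=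
              lintegral_mono fun x₁ => hinner x₁ (x₁ - (j₁:ℝ))
    _ ≤ mnorm p volume (Ff q f) * amal ∞ ∞ g := houter
    _ = mixedLpq p q f * amal ∞ ∞ g := by rw [mixedLpq_eq]
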